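/- Let Y be integrable and Z a random variable, and let T be a {0,1}-valued random variable with P(T=1) > 0. Suppose Q(t, z) is a measurable function with Q(T, Z) = E[Y | T, Z] almost surely. If the potential outcomes Y(0), Y(1) satisfy Y = Y(T), Y(t) is independent of T given Z for t ∈ {0,1}, and 0 < P(T = 1 | Z) < 1 almost surely, then E[Y(1) − Y(0) | T = 1] = E[Q(1, Z) − Q(0, Z) | T = 1]. -/

import Mathlib

open MeasureTheory ProbabilityTheory Filter Topology

/-! ### Auxiliary lemmas about the truncation `x ↦ max (-n) (min n x)` -/

private lemma att_trunc_abs_le_abs (n : ℕ) (x : ℝ) :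
    |max (-(n : ℝ)) (min (n : ℝ) x)| ≤ |x| := by
  rw [abs_le]
  constructor
  · refine le_trans ?_ (le_max_right _ _)
    exact le_min (le_trans (neg_nonpos_of_nonneg (abs_nonneg x)) (by positivity)) (neg_abs_le x)
  · exact max_le (le_trans (neg_nonpos_of_nonneg (by positivity)) (abs_nonneg x))
      (le_trans (min_le_right _ _) (le_abs_self x))

private lemma att_trunc_tendsto (x : ℝ) :
    Tendsto (fun n : ℕ => max (-(n : ℝ)) (min (n : ℝ) x)) atTop (𝓝 x) := by
  refine tendsto_atTop_of_eventually_const (i₀ := ⌈|x|⌉₊) fun n hn => ?_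
  have hx : |x| ≤ (n : ℝ) := le_trans (Nat.le_ceil _) (by exact_mod_cast hn)
  rw [min_eq_right (le_trans (le_abs_self x) hx),
    max_eq_right (le_trans (neg_le_neg hx) (neg_abs_le x))]

private lemma att_trunc_cont (n : ℕ) :
    Continuous (fun x : ℝ => max (-(n : ℝ)) (min (n : ℝ) x)) :=
  continuous_const.max (continuous_const.min continuous_id)

private lemma att_trunc_aesm {α : Type*} [MeasurableSpace α] {μ : Measure α} {W : α → ℝ}
    (hW : AEStronglyMeasurable W μ) (n : ℕ) :
    AEStronglyMeasurable (fun ω => max (-(n : ℝ)) (min (n : ℝ) (W ω))) μ :=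
  (att_trunc_cont n).comp_aestronglyMeasurable hW

/-- `trunc n ∘ W` converges to `W` in `L¹`, even after multiplying by a function
bounded by `1`. -/
private lemma att_trunc_L1 {α : Type*} [MeasurableSpace α] {μ : Measure α} {W B : α → ℝ}
    (hW : Integrable W μ) (hB : AEStronglyMeasurable B μ) (hB1 : ∀ ω, |B ω| ≤ 1) :
    Tendsto (fun n : ℕ => ∫ ω, |max (-(n : ℝ)) (min (n : ℝ) (W ω)) * B ω - W ω * B ω| ∂μ)
      atTop (𝓝 0) := by
  have h := tendsto_integral_of_dominated_convergence (μ := μ)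
    (F := fun n ω => |max (-(n : ℝ)) (min (n : ℝ) (W ω)) * B ω - W ω * B ω|)
    (f := fun _ => (0 : ℝ)) (bound := fun ω => 2 * |W ω|)
    (fun n => (((att_trunc_aesm hW.1 n).mul hB).sub (hW.1.mul hB)).norm)
    (hW.abs.const_mul 2)
    (fun n => Eventually.of_forall fun ω => ?_)
    (Eventually.of_forall fun ω => ?_)
  · simpa using h
  · -- bound
    have h1 : |max (-(n : ℝ)) (min (n : ℝ) (W ω)) * B ω - W ω * B ω|
        ≤ 2 * |W ω| := by
      have : max (-(n : ℝ)) (min (n : ℝ) (W ω)) * B ω - W ω * B ω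
          = (max (-(n : ℝ)) (min (n : ℝ) (W ω)) - W ω) * B ω := by ring
      rw [this, abs_mul]
      calc |max (-(n : ℝ)) (min (n : ℝ) (W ω)) - W ω| * |B ω|
          ≤ |max (-(n : ℝ)) (min (n : ℝ) (W ω)) - W ω| * 1 :=
            mul_le_mul_of_nonneg_left (hB1 ω) (abs_nonneg _)
        _ = |max (-(n : ℝ)) (min (n : ℝ) (W ω)) - W ω| := mul_one _
        _ ≤ |max (-(n : ℝ)) (min (n : ℝ) (W ω))| + |W ω| := abs_sub _ _
        _ ≤ |W ω| + |W ω| := add_le_add_left (att_trunc_abs_le_abs n (W ω)) _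
        _ = 2 * |W ω| := by ring
    simpa [abs_abs, Real.norm_eq_abs] using h1
  · -- pointwise convergence
    have := (((att_trunc_tendsto (W ω)).mul_const (B ω)).sub
      (tendsto_const_nhds (x := W ω * B ω))).abs
    simpa using this

/-- Uniqueness of `L¹` limits. -/
private lemma att_unique {α : Type*} [MeasurableSpace α] {μ : Measure α}
    {a b : α → ℝ} (ha : Integrable a μ) (hb : Integrable b μ)
    {s : ℕ → α → ℝ} (hs : ∀ n, Integrable (s n) μ)
    (h1 : Tendsto (fun n => ∫ ω, |s n ω - a ω| ∂μ) atTop (𝓝 0))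
    (h2 : Tendsto (fun n => ∫ ω, |s n ω - b ω| ∂μ) atTop (𝓝 0)) :
    a =ᵐ[μ] b := by
  have hab : Integrable (fun ω => |a ω - b ω|) μ := (ha.sub hb).abs
  have hle : ∀ n, ∫ ω, |a ω - b ω| ∂μ
      ≤ (∫ ω, |s n ω - a ω| ∂μ) + ∫ ω, |s n ω - b ω| ∂μ := by
    intro n
    have hint1 : Integrable (fun ω => |s n ω - a ω|) μ := ((hs n).sub ha).abs
    have hint2 : Integrable (fun ω => |s n ω - b ω|) μ := ((hs n).sub hb).abs
    rw [← integral_add hint1 hint2]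
    refine integral_mono hab (hint1.add hint2) fun ω => ?_
    calc |a ω - b ω| = |(a ω - s n ω) + (s n ω - b ω)| := by ring_nf
      _ ≤ |a ω - s n ω| + |s n ω - b ω| := abs_add_le _ _
      _ = |s n ω - a ω| + |s n ω - b ω| := by rw [abs_sub_comm]
  have h0 : ∫ ω, |a ω - b ω| ∂μ ≤ 0 := by
    have hsum := h1.add h2
    rw [add_zero] at hsum
    exact le_of_tendsto_of_tendsto' tendsto_const_nhds hsum hle
  have hz : ∫ ω, |a ω - b ω| ∂μ = 0 :=
    le_antisymm h0 (integral_nonneg fun ω => abs_nonneg _)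
  have := (integral_eq_zero_iff_of_nonneg_ae (Eventually.of_forall fun ω => abs_nonneg _)
    hab).1 hz
  filter_upwards [this] with ω hω
  exact sub_eq_zero.1 (abs_eq_zero.1 hω)

/-- Extension of conditional independence from bounded truncations to an
integrable function: if the product rule for conditional expectations holds for every
truncation of `W` against a fixed bounded `B`, it holds for `W` itself. -/
private lemma att_key {α : Type*} (m : MeasurableSpace α) [m0 : MeasurableSpace α]
    (hm : m ≤ m0) (μ : Measure α) [IsProbabilityMeasure μ] (W B : α → ℝ)
    (hW : Integrable W μ) (hB : Measurable B) (hB1 : ∀ ω, |B ω| ≤ 1)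
    (hig : ∀ n : ℕ,
      μ[(fun ω => max (-(n : ℝ)) (min (n : ℝ) (W ω)) * B ω) | m]
        =ᵐ[μ] fun ω => (μ[(fun ω' => max (-(n : ℝ)) (min (n : ℝ) (W ω'))) | m]) ω
          * (μ[B | m]) ω) :
    μ[(fun ω => W ω * B ω) | m] =ᵐ[μ] fun ω => (μ[W | m]) ω * (μ[B | m]) ω := by
  haveI : SigmaFinite (μ.trim hm) := by
    have := isFiniteMeasure_trim hm (μ := μ); infer_instance
  set Wn : ℕ → α → ℝ := fun n ω => max (-(n : ℝ)) (min (n : ℝ) (W ω)) with hWndef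
  have hWn_int : ∀ n, Integrable (Wn n) μ := fun n =>
    Integrable.mono' hW.abs (att_trunc_aesm hW.1 n)
      (Eventually.of_forall fun ω => by
        simpa [Real.norm_eq_abs] using att_trunc_abs_le_abs n (W ω))
  have hWB_int : Integrable (fun ω => W ω * B ω) μ :=
    Integrable.mono' hW.abs (hW.1.mul hB.aestronglyMeasurable)
      (Eventually.of_forall fun ω => by
        rw [Real.norm_eq_abs, abs_mul]
        calc |W ω| * |B ω| ≤ |W ω| * 1 := mul_le_mul_of_nonneg_left (hB1 ω) (abs_nonneg _)
          _ = |W ω| := mul_one _)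
  have hWnB_int : ∀ n, Integrable (fun ω => Wn n ω * B ω) μ := fun n =>
    Integrable.mono' hW.abs ((att_trunc_aesm hW.1 n).mul hB.aestronglyMeasurable)
      (Eventually.of_forall fun ω => by
        rw [Real.norm_eq_abs, abs_mul]
        calc |Wn n ω| * |B ω| ≤ |Wn n ω| * 1 :=
              mul_le_mul_of_nonneg_left (hB1 ω) (abs_nonneg _)
          _ = |Wn n ω| := mul_one _
          _ ≤ |W ω| := att_trunc_abs_le_abs n (W ω))
  have heB_bdd : ∀ᵐ ω ∂μ, |(μ[B | m]) ω| ≤ 1 := by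
    have := ae_bdd_condExp_of_ae_bdd (m := m) (μ := μ) (R := 1)
      (f := B) (Eventually.of_forall (by simpa using hB1))
    simpa using this
  -- L¹ convergence of the truncations (with and without the factor B)
  have hL1B : Tendsto (fun n => ∫ ω, |Wn n ω * B ω - W ω * B ω| ∂μ) atTop (𝓝 0) :=
    att_trunc_L1 hW hB.aestronglyMeasurable hB1
  have hL1 : Tendsto (fun n => ∫ ω, |Wn n ω - W ω| ∂μ) atTop (𝓝 0) := by
    have := att_trunc_L1 (B := fun _ => (1 : ℝ)) hW aestronglyMeasurable_const
      (fun ω => by norm_num)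
    simpa using this
  -- the approximating sequence of conditional expectations
  set s : ℕ → α → ℝ := fun n => μ[(fun ω => Wn n ω * B ω) | m] with hsdef
  have hs_int : ∀ n, Integrable (s n) μ := fun n => integrable_condExp
  have hb_int : Integrable (fun ω => (μ[W | m]) ω * (μ[B | m]) ω) μ := by
    have h := Integrable.bdd_mul (μ := μ) (c := 1)
      (integrable_condExp : Integrable (μ[W | m]) μ)
      (stronglyMeasurable_condExp.mono hm).aestronglyMeasurable
      (by simpa [Real.norm_eq_abs] using heB_bdd)
    exact h.congr (Eventually.of_forall fun ω => mul_comm _ _)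
  -- first limit: s n → μ[W * B | m] in L¹
  have h1 : Tendsto (fun n => ∫ ω, |s n ω - (μ[(fun ω' => W ω' * B ω') | m]) ω| ∂μ)
      atTop (𝓝 0) := by
    refine squeeze_zero (fun n => integral_nonneg fun ω => abs_nonneg _)
      (fun n => ?_) hL1B
    have hsub : (fun ω => s n ω - (μ[(fun ω' => W ω' * B ω') | m]) ω)
        =ᵐ[μ] μ[(fun ω => Wn n ω * B ω - W ω * B ω) | m] :=
      (condExp_sub (hWnB_int n) hWB_int _).symm
    calc ∫ ω, |s n ω - (μ[(fun ω' => W ω' * B ω') | m]) ω| ∂μ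
        = ∫ ω, |(μ[(fun ω' => Wn n ω' * B ω' - W ω' * B ω') | m]) ω| ∂μ :=
          integral_congr_ae (hsub.fun_comp abs)
      _ ≤ ∫ ω, |Wn n ω * B ω - W ω * B ω| ∂μ := integral_abs_condExp_le _
  -- second limit: s n → μ[W|m] * μ[B|m] in L¹
  have hprod_int : ∀ f : α → ℝ, Integrable (fun ω => (μ[f | m]) ω * (μ[B | m]) ω) μ := by
    intro f
    have h := Integrable.bdd_mul (μ := μ) (c := 1)
      (integrable_condExp : Integrable (μ[f | m]) μ)
      (stronglyMeasurable_condExp.mono hm).aestronglyMeasurable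
      (by simpa [Real.norm_eq_abs] using heB_bdd)
    exact h.congr (Eventually.of_forall fun ω => mul_comm _ _)
  have h2 : Tendsto (fun n => ∫ ω, |s n ω - (μ[W | m]) ω * (μ[B | m]) ω| ∂μ)
      atTop (𝓝 0) := by
    refine squeeze_zero (fun n => integral_nonneg fun ω => abs_nonneg _)
      (fun n => ?_) hL1
    have hsub : (fun ω => s n ω - (μ[W | m]) ω * (μ[B | m]) ω)
        =ᵐ[μ] fun ω => (μ[(fun ω' => Wn n ω' - W ω') | m]) ω * (μ[B | m]) ω := by
      filter_upwards [hig n, condExp_sub (hWn_int n) hW (m := m)] with ω hω hω'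
      have hs' : s n ω = (μ[Wn n | m]) ω * (μ[B | m]) ω := hω
      rw [hs', ← sub_mul]
      congr 1
      exact hω'.symm
    calc ∫ ω, |s n ω - (μ[W | m]) ω * (μ[B | m]) ω| ∂μ
        = ∫ ω, |(μ[(fun ω' => Wn n ω' - W ω') | m]) ω * (μ[B | m]) ω| ∂μ :=
          integral_congr_ae (hsub.fun_comp abs)
      _ ≤ ∫ ω, |(μ[(fun ω' => Wn n ω' - W ω') | m]) ω| ∂μ := by
          refine integral_mono_ae (hprod_int _).abs integrable_condExp.abs ?_
          filter_upwards [heB_bdd] with ω hω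
          rw [abs_mul]
          calc |(μ[(fun ω' => Wn n ω' - W ω') | m]) ω| * |(μ[B | m]) ω|
              ≤ |(μ[(fun ω' => Wn n ω' - W ω') | m]) ω| * 1 :=
                mul_le_mul_of_nonneg_left hω (abs_nonneg _)
            _ = _ := mul_one _
      _ ≤ ∫ ω, |Wn n ω - W ω| ∂μ := integral_abs_condExp_le _
  exact att_unique integrable_condExp hb_int hs_int h1 h2

/-- Backdoor identification of the ATT: under consistency, conditional
ignorability of the potential outcomes `Y0, Y1` given `Z`, and overlap,
`E[Y(1) - Y(0) | T = 1] = E[Q(1,Z) - Q(0,Z) | T = 1]`, where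
`Q(T,Z) = E[Y | T, Z]` almost surely. -/
theorem att_backdoor_identification
    {Ω 𝒵 : Type*} [MeasurableSpace Ω] [MeasurableSpace 𝒵]
    (μ : Measure Ω) [IsProbabilityMeasure μ]
    (T : Ω → ℝ) (hTmeas : Measurable T) (hT01 : ∀ ω, T ω = 0 ∨ T ω = 1)
    (hTpos : 0 < μ {ω | T ω = 1})
    (Z : Ω → 𝒵) (hZ : Measurable Z)
    (Y Y0 Y1 : Ω → ℝ)
    (hYint : Integrable Y μ) (hY0int : Integrable Y0 μ) (hY1int : Integrable Y1 μ)
    -- consistency: Y = Y(T)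
    (hconsistency : ∀ ω, Y ω = if T ω = 1 then Y1 ω else Y0 ω)
    -- conditional ignorability: Y(t) ⟂ T | Z for t ∈ {0,1}
    (hignore : ∀ Yt, (Yt = Y0 ∨ Yt = Y1) →
      ∀ f g : ℝ → ℝ, Measurable f → Measurable g →
        (∃ C : ℝ, ∀ x, |f x| ≤ C) → (∃ C : ℝ, ∀ x, |g x| ≤ C) →
        μ[(fun ω => f (Yt ω) * g (T ω)) | MeasurableSpace.comap Z ‹MeasurableSpace 𝒵›]
          =ᵐ[μ] fun ω =>
            (μ[(fun ω' => f (Yt ω')) | MeasurableSpace.comap Z ‹MeasurableSpace 𝒵›]) ω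
            * (μ[(fun ω' => g (T ω')) | MeasurableSpace.comap Z ‹MeasurableSpace 𝒵›]) ω)
    -- overlap: 0 < P(T=1 | Z) < 1 a.s.
    (hoverlap : ∀ᵐ ω ∂μ,
      0 < (μ[(fun ω' => if T ω' = 1 then (1 : ℝ) else 0) |
            MeasurableSpace.comap Z ‹MeasurableSpace 𝒵›]) ω ∧
      (μ[(fun ω' => if T ω' = 1 then (1 : ℝ) else 0) |
            MeasurableSpace.comap Z ‹MeasurableSpace 𝒵›]) ω < 1)
    (Q : ℝ × 𝒵 → ℝ) (hQmeas : Measurable Q)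
    (hQ : (fun ω => Q (T ω, Z ω))
        =ᵐ[μ] μ[Y | MeasurableSpace.comap (fun ω => (T ω, Z ω)) inferInstance])
    (hQ1int : Integrable (fun ω => Q (1, Z ω)) μ)
    (hQ0int : Integrable (fun ω => Q (0, Z ω)) μ) :
    ∫ ω, (Y1 ω - Y0 ω) ∂(μ[|{ω | T ω = 1}])
      = ∫ ω, (Q (1, Z ω) - Q (0, Z ω)) ∂(μ[|{ω | T ω = 1}]) := by
  classical
  have hmZ : MeasurableSpace.comap Z ‹MeasurableSpace 𝒵› ≤ ‹MeasurableSpace Ω› := hZ.comap_le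
  have hmTZ : MeasurableSpace.comap (fun ω => (T ω, Z ω))
      (inferInstance : MeasurableSpace (ℝ × 𝒵)) ≤ ‹MeasurableSpace Ω› :=
    (hTmeas.prodMk hZ).comap_le
  have hZTZ : MeasurableSpace.comap Z ‹MeasurableSpace 𝒵›
      ≤ MeasurableSpace.comap (fun ω => (T ω, Z ω)) inferInstance := by
    have h : Z = Prod.snd ∘ (fun ω => (T ω, Z ω)) := rfl
    rw [h, ← MeasurableSpace.comap_comp]
    exact MeasurableSpace.comap_mono measurable_snd.comap_le
  haveI : SigmaFinite (μ.trim hmZ) := by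
    have := isFiniteMeasure_trim hmZ (μ := μ); infer_instance
  haveI : SigmaFinite (μ.trim hmTZ) := by
    have := isFiniteMeasure_trim hmTZ (μ := μ); infer_instance
  set A : Set Ω := {ω | T ω = 1} with hAdef
  have hA : MeasurableSet A := hTmeas (measurableSet_singleton 1)
  have hAmTZ : MeasurableSet[MeasurableSpace.comap (fun ω => (T ω, Z ω)) inferInstance] A :=
    ⟨{p : ℝ × 𝒵 | p.1 = 1}, measurable_fst (measurableSet_singleton 1), rfl⟩
  -- the treatment indicator and the propensity score
  set ι : Ω → ℝ := fun ω => if T ω = 1 then (1 : ℝ) else 0 with hιdef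
  set e : Ω → ℝ := μ[ι | MeasurableSpace.comap Z ‹MeasurableSpace 𝒵›] with hedef
  have hι_eq_ind : ι = A.indicator (fun _ => (1 : ℝ)) := by
    funext ω; by_cases h : T ω = 1 <;> simp [hιdef, hAdef, Set.indicator, h]
  have hι_meas : Measurable ι := by
    rw [hι_eq_ind]; exact measurable_const.indicator hA
  have hι_int : Integrable ι μ := by
    rw [hι_eq_ind]; exact (integrable_const (1:ℝ)).indicator hA
  have hι_bdd : ∀ ω, |ι ω| ≤ 1 := by
    intro ω; by_cases h : T ω = 1 <;> simp [hιdef, h]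
  -- indicator-type integral identities
  have hmul_ind : ∀ f : Ω → ℝ, (fun ω => f ω * ι ω) = A.indicator f := by
    intro f; funext ω
    by_cases h : T ω = 1 <;> simp [hιdef, hAdef, Set.indicator, h]
  have hsetInt : ∀ f : Ω → ℝ, ∫ ω in A, f ω ∂μ = ∫ ω, f ω * ι ω ∂μ := by
    intro f; rw [hmul_ind f]; exact (integral_indicator hA).symm
  -- Step A (ignorability extended to integrable Y0):
  have hkey : μ[(fun ω => Y0 ω * ι ω) | MeasurableSpace.comap Z ‹MeasurableSpace 𝒵›]
      =ᵐ[μ] fun ω => (μ[Y0 | MeasurableSpace.comap Z ‹MeasurableSpace 𝒵›]) ω * e ω := by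
    refine att_key _ hmZ μ Y0 ι hY0int hι_meas hι_bdd fun n => ?_
    exact hignore Y0 (Or.inl rfl)
      (fun x => max (-(n : ℝ)) (min (n : ℝ) x)) (fun x => if x = 1 then (1:ℝ) else 0)
      (measurable_const.max (measurable_const.min measurable_id))
      (measurable_const.ite (measurableSet_singleton 1) measurable_const)
      ⟨n, fun x => by
        rw [abs_le]
        exact ⟨le_max_left _ _, max_le (neg_le_self (by positivity)) (min_le_left _ _)⟩⟩
      ⟨1, fun x => by by_cases h : x = 1 <;> simp [h]⟩
  -- the Z-measurable function Q(0, Z ·)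
  have hq0SM : StronglyMeasurable[MeasurableSpace.comap Z ‹MeasurableSpace 𝒵›]
      (fun ω => Q (0, Z ω)) := by
    have hZm : Measurable[MeasurableSpace.comap Z ‹MeasurableSpace 𝒵›] Z :=
      measurable_iff_comap_le.2 le_rfl
    exact ((hQmeas.comp (measurable_const.prodMk measurable_id)).comp hZm).stronglyMeasurable
  -- Step B: identification Q(0, Z ·) =ᵐ μ[Y0 | Z]
  have hident : (fun ω => Q (0, Z ω))
      =ᵐ[μ] μ[Y0 | MeasurableSpace.comap Z ‹MeasurableSpace 𝒵›] := by
    set κ : Ω → ℝ := fun ω => 1 - ι ω with hκdef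
    have hκ_int : Integrable κ μ := (integrable_const (1:ℝ)).sub hι_int
    have hYι_int : Integrable (fun ω => Y ω * ι ω) μ := by
      rw [hmul_ind]; exact hYint.indicator hA
    have hYκ_int : Integrable (fun ω => Y ω * κ ω) μ := by
      have h : (fun ω => Y ω * κ ω) = fun ω => Y ω - Y ω * ι ω :=
        funext fun ω => by show Y ω * (1 - ι ω) = _; ring
      rw [h]; exact hYint.sub hYι_int
    have hq0ι_int : Integrable (fun ω => Q (0, Z ω) * ι ω) μ := by
      rw [hmul_ind]; exact hQ0int.indicator hA
    have hq0κ_int : Integrable (fun ω => Q (0, Z ω) * κ ω) μ := by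
      have h : (fun ω => Q (0, Z ω) * κ ω) = fun ω => Q (0, Z ω) - Q (0, Z ω) * ι ω :=
        funext fun ω => by show Q (0, Z ω) * (1 - ι ω) = _; ring
      rw [h]; exact hQ0int.sub hq0ι_int
    have hY0ι_int : Integrable (fun ω => Y0 ω * ι ω) μ := by
      rw [hmul_ind]; exact hY0int.indicator hA
    -- consistency: Y·κ = Y0·κ
    have c_cons : (fun ω => Y ω * κ ω) = fun ω => Y0 ω * κ ω := by
      funext ω
      by_cases h : T ω = 1 <;>
        simp [hconsistency ω, h, hκdef, hιdef]
    -- κ is (T,Z)-measurable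
    have hι_mTZ : Measurable[MeasurableSpace.comap (fun ω => (T ω, Z ω)) inferInstance] ι := by
      rw [hι_eq_ind]
      exact measurable_const.indicator hAmTZ
    have hκSM : StronglyMeasurable[MeasurableSpace.comap (fun ω => (T ω, Z ω)) inferInstance]
        κ := (measurable_const.sub hι_mTZ).stronglyMeasurable
    -- tower property
    have tower : μ[(fun ω => Y ω * κ ω) | MeasurableSpace.comap Z ‹MeasurableSpace 𝒵›]
        =ᵐ[μ] μ[μ[(fun ω => Y ω * κ ω) |
            MeasurableSpace.comap (fun ω => (T ω, Z ω)) inferInstance] |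
          MeasurableSpace.comap Z ‹MeasurableSpace 𝒵›] :=
      (condExp_condExp_of_le hZTZ hmTZ).symm
    -- pull out κ at the level of (T,Z)
    have pull_TZ : μ[(fun ω => Y ω * κ ω) |
          MeasurableSpace.comap (fun ω => (T ω, Z ω)) inferInstance]
        =ᵐ[μ] fun ω => κ ω * (μ[Y | MeasurableSpace.comap (fun ω => (T ω, Z ω))
            inferInstance]) ω := by
      have hcomm : (fun ω => Y ω * κ ω) = fun ω => κ ω * Y ω :=
        funext fun ω => mul_comm _ _
      rw [hcomm]
      have hκY_int : Integrable (fun ω => κ ω * Y ω) μ := by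
        rw [show (fun ω => κ ω * Y ω) = fun ω => Y ω * κ ω from funext fun ω => mul_comm _ _]
        exact hYκ_int
      exact condExp_mul_of_stronglyMeasurable_left hκSM hκY_int hYint
    -- identify the inner conditional expectation with Q(0, Z ·) * κ
    have inner_eq : μ[(fun ω => Y ω * κ ω) |
          MeasurableSpace.comap (fun ω => (T ω, Z ω)) inferInstance]
        =ᵐ[μ] fun ω => Q (0, Z ω) * κ ω := by
      filter_upwards [pull_TZ, hQ] with ω h1 h2
      rw [h1, ← h2]
      rcases hT01 ω with h | h
      · rw [h]; exact mul_comm _ _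
      · have : κ ω = 0 := by simp [hκdef, hιdef, h]
        rw [this, mul_zero, zero_mul]
    -- conditional expectation of κ given Z
    have hκcond : μ[κ | MeasurableSpace.comap Z ‹MeasurableSpace 𝒵›]
        =ᵐ[μ] fun ω => 1 - e ω := by
      have h1 : μ[κ | MeasurableSpace.comap Z ‹MeasurableSpace 𝒵›]
          =ᵐ[μ] μ[(fun _ => (1:ℝ)) | MeasurableSpace.comap Z ‹MeasurableSpace 𝒵›]
            - μ[ι | MeasurableSpace.comap Z ‹MeasurableSpace 𝒵›] :=
        condExp_sub (integrable_const (1:ℝ)) hι_int _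
      filter_upwards [h1] with ω hω
      rw [hω, Pi.sub_apply, condExp_const hmZ]
    -- left-hand side: μ[Y·κ | Z] = Q(0,Z)·(1-e)
    have LHS_eq : μ[(fun ω => Y ω * κ ω) | MeasurableSpace.comap Z ‹MeasurableSpace 𝒵›]
        =ᵐ[μ] fun ω => Q (0, Z ω) * (1 - e ω) := by
      refine tower.trans ?_
      refine (condExp_congr_ae inner_eq).trans ?_
      refine (condExp_mul_of_stronglyMeasurable_left hq0SM hq0κ_int hκ_int).trans ?_
      filter_upwards [hκcond] with ω hω
      show Q (0, Z ω) * (μ[κ | MeasurableSpace.comap Z ‹MeasurableSpace 𝒵›]) ω = _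
      rw [hω]
    -- right-hand side: μ[Y0·κ | Z] = μ[Y0|Z]·(1-e)
    have RHS_eq : μ[(fun ω => Y0 ω * κ ω) | MeasurableSpace.comap Z ‹MeasurableSpace 𝒵›]
        =ᵐ[μ] fun ω => (μ[Y0 | MeasurableSpace.comap Z ‹MeasurableSpace 𝒵›]) ω
          * (1 - e ω) := by
      have h : (fun ω => Y0 ω * κ ω) = fun ω => Y0 ω - Y0 ω * ι ω :=
        funext fun ω => by show Y0 ω * (1 - ι ω) = _; ring
      rw [h]
      have h1 : μ[(fun ω => Y0 ω - Y0 ω * ι ω) | MeasurableSpace.comap Z ‹MeasurableSpace 𝒵›]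
          =ᵐ[μ] μ[Y0 | MeasurableSpace.comap Z ‹MeasurableSpace 𝒵›]
            - μ[(fun ω => Y0 ω * ι ω) | MeasurableSpace.comap Z ‹MeasurableSpace 𝒵›] :=
        condExp_sub hY0int hY0ι_int _
      filter_upwards [h1, hkey] with ω hω hω'
      rw [hω, Pi.sub_apply, hω']
      ring
    -- combine and cancel (1 - e) using overlap
    have hL : μ[(fun ω => Y0 ω * κ ω) | MeasurableSpace.comap Z ‹MeasurableSpace 𝒵›]
        =ᵐ[μ] fun ω => Q (0, Z ω) * (1 - e ω) := by
      rw [← c_cons]; exact LHS_eq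
    have hmain := (hL.symm.trans RHS_eq)
    filter_upwards [hmain, hoverlap] with ω hω hov
    exact mul_right_cancel₀ (sub_ne_zero.2 (ne_of_gt hov.2)) hω
  -- Step C: ∫_A Y1 = ∫_A Q(1,Z)
  have hY1leg : ∫ ω in A, Y1 ω ∂μ = ∫ ω in A, Q (1, Z ω) ∂μ := by
    have h1 : ∫ ω in A, Y1 ω ∂μ = ∫ ω in A, Y ω ∂μ :=
      setIntegral_congr_fun hA fun ω hω => by
        simp [hconsistency ω, hAdef, Set.mem_setOf_eq.mp hω]
    have h2 : ∫ ω in A, Y ω ∂μ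
        = ∫ ω in A, (μ[Y | MeasurableSpace.comap (fun ω => (T ω, Z ω)) inferInstance]) ω ∂μ :=
      (setIntegral_condExp hmTZ hYint hAmTZ).symm
    have h3 : ∫ ω in A, (μ[Y | MeasurableSpace.comap (fun ω => (T ω, Z ω)) inferInstance]) ω ∂μ
        = ∫ ω in A, Q (T ω, Z ω) ∂μ := by
      refine setIntegral_congr_ae hA ?_
      filter_upwards [hQ] with ω hω _
      exact hω.symm
    have h4 : ∫ ω in A, Q (T ω, Z ω) ∂μ = ∫ ω in A, Q (1, Z ω) ∂μ :=
      setIntegral_congr_fun hA fun ω hω => by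
        have : T ω = 1 := hω
        rw [this]
    rw [h1, h2, h3, h4]
  -- Step D: ∫_A Y0 = ∫_A Q(0,Z)
  have hY0leg : ∫ ω in A, Y0 ω ∂μ = ∫ ω in A, Q (0, Z ω) ∂μ := by
    have hq0ι_int : Integrable (fun ω => Q (0, Z ω) * ι ω) μ := by
      rw [hmul_ind]; exact hQ0int.indicator hA
    have hY0ι_int : Integrable (fun ω => Y0 ω * ι ω) μ := by
      rw [hmul_ind]; exact hY0int.indicator hA
    have hpull : μ[(fun ω => Q (0, Z ω) * ι ω) | MeasurableSpace.comap Z ‹MeasurableSpace 𝒵›]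
        =ᵐ[μ] fun ω => Q (0, Z ω) * e ω := by
      have := condExp_mul_of_stronglyMeasurable_left (μ := μ) hq0SM
        (g := ι) (f := fun ω => Q (0, Z ω)) ?_ hι_int
      · exact this
      · exact hq0ι_int
    calc ∫ ω in A, Y0 ω ∂μ = ∫ ω, Y0 ω * ι ω ∂μ := hsetInt Y0
      _ = ∫ ω, (μ[(fun ω' => Y0 ω' * ι ω') |
            MeasurableSpace.comap Z ‹MeasurableSpace 𝒵›]) ω ∂μ :=
          (integral_condExp hmZ).symm
      _ = ∫ ω, (μ[Y0 | MeasurableSpace.comap Z ‹MeasurableSpace 𝒵›]) ω * e ω ∂μ :=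
          integral_congr_ae hkey
      _ = ∫ ω, Q (0, Z ω) * e ω ∂μ := by
          refine integral_congr_ae ?_
          filter_upwards [hident] with ω hω
          rw [hω]
      _ = ∫ ω, (μ[(fun ω' => Q (0, Z ω') * ι ω') |
            MeasurableSpace.comap Z ‹MeasurableSpace 𝒵›]) ω ∂μ :=
          (integral_congr_ae hpull).symm
      _ = ∫ ω, Q (0, Z ω) * ι ω ∂μ := integral_condExp hmZ
      _ = ∫ ω in A, Q (0, Z ω) ∂μ := (hsetInt _).symm
  -- conclusion
  show ∫ ω, (Y1 ω - Y0 ω) ∂((μ A)⁻¹ • μ.restrict A)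
      = ∫ ω, (Q (1, Z ω) - Q (0, Z ω)) ∂((μ A)⁻¹ • μ.restrict A)
  rw [integral_smul_measure, integral_smul_measure]
  congr 1
  rw [integral_sub (hY1int.restrict) (hY0int.restrict),
    integral_sub (hQ1int.restrict) (hQ0int.restrict), hY1leg, hY0leg]
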